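/- Let (Ω, μ) be a measure space, let A be a real symmetric invertible N×N matrix with ρ_min = min_i |λ_i| (λ_i the eigenvalues of A), and let F, β₁, β₂ : Ω → ℝ^N be measurable functions such that ω ↦ ‖Aβ₁(ω) − F(ω)‖² and ω ↦ ‖Aβ₂(ω) − F(ω)‖² are μ-integrable and ∫_Ω ‖Aβ₁(ω) − F(ω)‖² dμ(ω) ≤ ∫_Ω ‖Aβ₂(ω) − F(ω)‖² dμ(ω). Then ∫_Ω ‖β₁(ω) − β₂(ω)‖² dμ(ω) ≤ (4/ρ_min²) ∫_Ω ‖Aβ₂(ω) − F(ω)‖² dμ(ω). (This is the stability estimate used in the generalization-error analysis: the squared L²(Ω) distance between two coefficient maps is controlled, up to the factor 4/ρ_min², by the larger of their residual losses.) -/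

import Mathlib

open MeasureTheory

/-- Euclidean norm of a vector in `ℝ^N`. -/
noncomputable def euclNorm {N : ℕ} (v : Fin N → ℝ) : ℝ :=
  ‖(EuclideanSpace.equiv (Fin N) ℝ).symm v‖

lemma euclNorm_nonneg {N : ℕ} (v : Fin N → ℝ) : 0 ≤ euclNorm v := norm_nonneg _

lemma euclNorm_sub_le {N : ℕ} (x y : Fin N → ℝ) :
    euclNorm (x - y) ≤ euclNorm x + euclNorm y := by
  have : (EuclideanSpace.equiv (Fin N) ℝ).symm (x - y)
      = (EuclideanSpace.equiv (Fin N) ℝ).symm x - (EuclideanSpace.equiv (Fin N) ℝ).symm y :=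
    map_sub _ _ _
  rw [euclNorm, this]
  exact norm_sub_le _ _

/-- Spectral lower bound: `ρ ‖v‖ ≤ ‖A v‖` when all eigenvalues have absolute value `≥ ρ`. -/
lemma spectral_lower_bound {N : ℕ} (A : Matrix (Fin N) (Fin N) ℝ) (hA : A.IsHermitian)
    (ρ : ℝ) (hρ0 : 0 ≤ ρ) (hρ : ∀ i, ρ ≤ |hA.eigenvalues i|)
    (v : EuclideanSpace ℝ (Fin N)) :
    ρ * ‖v‖ ≤ euclNorm (A.mulVec v) := by
  set B := hA.eigenvectorBasis with hB
  set w : EuclideanSpace ℝ (Fin N) := (EuclideanSpace.equiv (Fin N) ℝ).symm (A.mulVec v)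
    with hwdef
  have hAt : A.transpose = A := by
    have := hA
    rwa [Matrix.IsHermitian, Matrix.conjTranspose_eq_transpose_of_trivial] at this
  have hrepr : ∀ i, B.repr w i = hA.eigenvalues i * B.repr v i := by
    intro i
    have h1 : B.repr w i = inner ℝ (B i) w := B.repr_apply_apply w i
    have h2 : B.repr v i = inner ℝ (B i) v := B.repr_apply_apply v i
    rw [h1, h2]
    have hinner : (inner ℝ (B i) w : ℝ) = dotProduct (⇑(B i)) (A.mulVec v) := by
      simp [hwdef, PiLp.inner_apply, dotProduct, RCLike.inner_apply, EuclideanSpace.equiv, mul_comm]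
    have hinner2 : (inner ℝ (B i) v : ℝ) = dotProduct (⇑(B i)) (⇑v) := by
      simp [PiLp.inner_apply, dotProduct, RCLike.inner_apply, mul_comm]
    rw [hinner, hinner2, Matrix.dotProduct_mulVec]
    have hvm : Matrix.vecMul (⇑(B i)) A = A.mulVec (⇑(B i)) := by
      rw [← Matrix.mulVec_transpose, hAt]
    rw [hvm, hA.mulVec_eigenvectorBasis i]
    simp [dotProduct, Finset.mul_sum, mul_assoc, hB]
  have normsq : ∀ u : EuclideanSpace ℝ (Fin N), ‖u‖ ^ 2 = ∑ i, (B.repr u i) ^ 2 := by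
    intro u
    rw [← B.repr.norm_map u, EuclideanSpace.norm_eq, Real.sq_sqrt (by positivity)]
    simp [Real.norm_eq_abs, sq_abs]
  have hsq : (ρ * ‖v‖) ^ 2 ≤ ‖w‖ ^ 2 := by
    rw [mul_pow, normsq w, normsq v, Finset.mul_sum]
    apply Finset.sum_le_sum
    intro i _
    rw [hrepr i, mul_pow]
    have h1 : ρ ^ 2 ≤ (hA.eigenvalues i) ^ 2 := by
      have := hρ i
      nlinarith [abs_nonneg (hA.eigenvalues i), sq_abs (hA.eigenvalues i)]
    nlinarith [sq_nonneg (B.repr v i)]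
  have h0 : 0 ≤ ρ * ‖v‖ := mul_nonneg hρ0 (norm_nonneg _)
  have := Real.sqrt_le_sqrt hsq
  rwa [Real.sqrt_sq h0, Real.sqrt_sq (norm_nonneg _)] at this

/-- (Stability estimate used in the generalization-error analysis.)
Let `(Ω, μ)` be a measure space, `A` a real symmetric (= Hermitian over `ℝ`) invertible
`N×N` matrix with `ρ_min = min_i |λ_i|`, and let `F, β₁, β₂ : Ω → ℝ^N` be measurable with
`ω ↦ ‖Aβ₁(ω) − F(ω)‖²` and `ω ↦ ‖Aβ₂(ω) − F(ω)‖²` μ-integrable and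
`∫ ‖Aβ₁ − F‖² dμ ≤ ∫ ‖Aβ₂ − F‖² dμ`.  Then
`∫ ‖β₁ − β₂‖² dμ ≤ (4/ρ_min²) ∫ ‖Aβ₂ − F‖² dμ`. -/
theorem stability_estimate
    {N : ℕ} (hN : 0 < N) (A : Matrix (Fin N) (Fin N) ℝ)
    (hA : A.IsHermitian) (hinv : IsUnit A)
    (ρmin : ℝ)
    (hρmin : IsLeast {r : ℝ | ∃ i : Fin N, r = |hA.eigenvalues i|} ρmin)
    {Ω : Type*} [MeasurableSpace Ω] (μ : Measure Ω)
    (F β₁ β₂ : Ω → Fin N → ℝ)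
    (hFmeas : Measurable F) (hβ₁meas : Measurable β₁) (hβ₂meas : Measurable β₂)
    (hint₁ : Integrable (fun ω => (euclNorm (A.mulVec (β₁ ω) - F ω)) ^ 2) μ)
    (hint₂ : Integrable (fun ω => (euclNorm (A.mulVec (β₂ ω) - F ω)) ^ 2) μ)
    (hmin : (∫ ω, (euclNorm (A.mulVec (β₁ ω) - F ω)) ^ 2 ∂μ)
        ≤ ∫ ω, (euclNorm (A.mulVec (β₂ ω) - F ω)) ^ 2 ∂μ) :
    (∫ ω, (euclNorm (β₁ ω - β₂ ω)) ^ 2 ∂μ)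
      ≤ (4 / ρmin ^ 2) * ∫ ω, (euclNorm (A.mulVec (β₂ ω) - F ω)) ^ 2 ∂μ := by
  -- ρmin > 0
  obtain ⟨⟨j, hj⟩, hlb⟩ := hρmin
  have hdet : A.det ≠ 0 := by
    have := (Matrix.isUnit_iff_isUnit_det A).mp hinv
    exact isUnit_iff_ne_zero.mp this
  have heig : ∀ i, hA.eigenvalues i ≠ 0 := by
    intro i
    have hprod : A.det = ∏ k, hA.eigenvalues k := by
      simpa using hA.det_eq_prod_eigenvalues
    rw [hprod] at hdet
    exact Finset.prod_ne_zero_iff.mp hdet i (Finset.mem_univ i)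
  have hρpos : 0 < ρmin := by
    rw [hj]
    exact abs_pos.mpr (heig j)
  have hρle : ∀ i, ρmin ≤ |hA.eigenvalues i| := fun i => hlb ⟨i, rfl⟩
  -- pointwise bound
  have hpt : ∀ ω, (euclNorm (β₁ ω - β₂ ω)) ^ 2
      ≤ (2 / ρmin ^ 2) * ((euclNorm (A.mulVec (β₁ ω) - F ω)) ^ 2
        + (euclNorm (A.mulVec (β₂ ω) - F ω)) ^ 2) := by
    intro ω
    set a := euclNorm (A.mulVec (β₁ ω) - F ω)
    set b := euclNorm (A.mulVec (β₂ ω) - F ω)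
    set d := euclNorm (β₁ ω - β₂ ω) with hd
    have key : ρmin * d ≤ a + b := by
      have h1 := spectral_lower_bound A hA ρmin hρpos.le hρle
        ((EuclideanSpace.equiv (Fin N) ℝ).symm (β₁ ω - β₂ ω))
      have h2 : A.mulVec (((EuclideanSpace.equiv (Fin N) ℝ).symm (β₁ ω - β₂ ω)) : Fin N → ℝ)
          = A.mulVec (β₁ ω - β₂ ω) := rfl
      rw [h2] at h1
      have h3 : A.mulVec (β₁ ω - β₂ ω)
          = (A.mulVec (β₁ ω) - F ω) - (A.mulVec (β₂ ω) - F ω) := by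
        rw [Matrix.mulVec_sub]; abel
      calc ρmin * d ≤ euclNorm (A.mulVec (β₁ ω - β₂ ω)) := h1
        _ = euclNorm ((A.mulVec (β₁ ω) - F ω) - (A.mulVec (β₂ ω) - F ω)) := by rw [h3]
        _ ≤ a + b := euclNorm_sub_le _ _
    have ha : 0 ≤ a := euclNorm_nonneg _
    have hb : 0 ≤ b := euclNorm_nonneg _
    have hdn : 0 ≤ d := euclNorm_nonneg _
    have hsq : (ρmin * d) ^ 2 ≤ (a + b) ^ 2 := by
      apply pow_le_pow_left₀ (mul_nonneg hρpos.le hdn) key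
    have h2 : ρmin ^ 2 * d ^ 2 ≤ 2 * (a ^ 2 + b ^ 2) := by nlinarith [sq_nonneg (a - b)]
    rw [div_mul_eq_mul_div, le_div_iff₀ (by positivity)]
    nlinarith
  -- integrate
  have hmono : (∫ ω, (euclNorm (β₁ ω - β₂ ω)) ^ 2 ∂μ)
      ≤ ∫ ω, (2 / ρmin ^ 2) * ((euclNorm (A.mulVec (β₁ ω) - F ω)) ^ 2
        + (euclNorm (A.mulVec (β₂ ω) - F ω)) ^ 2) ∂μ := by
    apply integral_mono_of_nonneg
    · exact Filter.Eventually.of_forall fun ω => sq_nonneg _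
    · exact (hint₁.add hint₂).const_mul _
    · exact Filter.Eventually.of_forall hpt
  rw [integral_const_mul, integral_add hint₁ hint₂] at hmono
  have hI₂ : 0 ≤ ∫ ω, (euclNorm (A.mulVec (β₂ ω) - F ω)) ^ 2 ∂μ :=
    integral_nonneg fun ω => sq_nonneg _
  have h2ρ : 0 ≤ 2 / ρmin ^ 2 := by positivity
  calc (∫ ω, (euclNorm (β₁ ω - β₂ ω)) ^ 2 ∂μ)
      ≤ 2 / ρmin ^ 2 * ((∫ ω, (euclNorm (A.mulVec (β₁ ω) - F ω)) ^ 2 ∂μ)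
        + ∫ ω, (euclNorm (A.mulVec (β₂ ω) - F ω)) ^ 2 ∂μ) := hmono
    _ ≤ 2 / ρmin ^ 2 * ((∫ ω, (euclNorm (A.mulVec (β₂ ω) - F ω)) ^ 2 ∂μ)
        + ∫ ω, (euclNorm (A.mulVec (β₂ ω) - F ω)) ^ 2 ∂μ) := by
        apply mul_le_mul_of_nonneg_left _ h2ρ
        linarith
    _ = (4 / ρmin ^ 2) * ∫ ω, (euclNorm (A.mulVec (β₂ ω) - F ω)) ^ 2 ∂μ := by ring
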